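/- Under restriction A1 (each Wᵢ is the block-diagonal matrix with an r × r permutation block and a scaled identity block c·I_{p-r}), the matrix M_d defined recursively by M_ℓ = W_ℓ(I_p + W_ℓᵀW_ℓ - M_{ℓ-1})⁻¹W_ℓᵀ equals the diagonal matrix diag((d/(d+1))·I_r, ((Σ_{j=1}^d c^{2j})/(1 + Σ_{j=1}^d c^{2j}))·I_{p-r}), independent of the choice of the permutation blocks. -/

import Mathlib

open Matrix

/-- The recursively defined matrices `M_ℓ = W_ℓ (I + W_ℓᵀ W_ℓ - M_{ℓ-1})⁻¹ W_ℓᵀ`, `M₀ = 0`. -/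
noncomputable def MrecGen {ι : Type*} [Fintype ι] [DecidableEq ι]
    (W : ℕ → Matrix ι ι ℝ) : ℕ → Matrix ι ι ℝ
  | 0 => 0
  | (k + 1) => W (k + 1) * (1 + (W (k + 1))ᵀ * W (k + 1) - MrecGen W k)⁻¹ * (W (k + 1))ᵀ

lemma perm_mul_permT {r : ℕ} (σ : Equiv.Perm (Fin r)) :
    σ.permMatrix ℝ * (σ.permMatrix ℝ)ᵀ = 1 := by
  rw [Equiv.Perm.permMatrix, ← PEquiv.toMatrix_symm, ← PEquiv.toMatrix_trans,
    ← Equiv.toPEquiv_symm, ← Equiv.toPEquiv_trans]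
  simp

lemma blockdiag_inv {r q : ℕ} (a b : ℝ) (ha : a ≠ 0) (hb : b ≠ 0) :
    (Matrix.fromBlocks (a • (1 : Matrix (Fin r) (Fin r) ℝ)) 0 0
      (b • (1 : Matrix (Fin q) (Fin q) ℝ)))⁻¹ =
    Matrix.fromBlocks (a⁻¹ • 1) 0 0 (b⁻¹ • 1) := by
  apply Matrix.inv_eq_right_inv
  rw [← Matrix.fromBlocks_one (l := Fin r) (m := Fin q)]
  simp [Matrix.fromBlocks_multiply, Matrix.smul_mul, Matrix.mul_smul, smul_smul,
    mul_inv_cancel₀ ha, mul_inv_cancel₀ hb, inv_mul_cancel₀ ha, inv_mul_cancel₀ hb]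

/-- Under restriction A1 (each `Wᵢ = [[Rᵢ, 0], [0, c·I_{p-r}]]` with `Rᵢ` an `r × r`
permutation matrix), the matrix `M_d` equals the diagonal matrix
`diag((d/(d+1))·I_r, ((∑_{j=1}^d c^{2j})/(1 + ∑_{j=1}^d c^{2j}))·I_{p-r})`,
independently of the choice of the permutation blocks. -/
theorem Mrec_of_restrictionA1
    (r q d : ℕ) (c : ℝ) (hc0 : 0 < c) (hc1 : c < 1)
    (R : ℕ → Equiv.Perm (Fin r))
    (W : ℕ → Matrix (Fin r ⊕ Fin q) (Fin r ⊕ Fin q) ℝ)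
    (hW : ∀ i, 1 ≤ i → i ≤ d →
      W i = Matrix.fromBlocks ((R i).permMatrix ℝ) 0 0 (c • (1 : Matrix (Fin q) (Fin q) ℝ))) :
    MrecGen W d =
      Matrix.fromBlocks (((d : ℝ) / ((d : ℝ) + 1)) • 1) 0 0
        (((∑ j ∈ Finset.Icc 1 d, c ^ (2 * j)) / (1 + ∑ j ∈ Finset.Icc 1 d, c ^ (2 * j))) • 1) := by
  induction d with
  | zero => simp [MrecGen]
  | succ k ih =>
    have hSnonneg : ∀ n : ℕ, (0:ℝ) ≤ ∑ j ∈ Finset.Icc 1 n, c ^ (2 * j) :=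
      fun n => Finset.sum_nonneg fun j _ => pow_nonneg hc0.le _
    set Sk := ∑ j ∈ Finset.Icc 1 k, c ^ (2 * j) with hSk
    have key : ∀ n : ℕ, ∑ j ∈ Finset.Icc 1 (n+1), c ^ (2*j) =
        c^2 * (1 + ∑ j ∈ Finset.Icc 1 n, c^(2*j)) := by
      intro n
      induction n with
      | zero => simp
      | succ m ihm =>
        rw [Finset.sum_Icc_succ_top (by omega : 1 ≤ m+1+1)]
        conv_lhs => rw [ihm]
        rw [Finset.sum_Icc_succ_top (by omega : 1 ≤ m+1)]
        ring
    have hSsucc : ∑ j ∈ Finset.Icc 1 (k+1), c ^ (2 * j) = c ^ 2 * (1 + Sk) := by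
      rw [key k, hSk]
    have hMk : MrecGen W k =
        Matrix.fromBlocks (((k : ℝ) / ((k : ℝ) + 1)) • 1) 0 0 ((Sk / (1 + Sk)) • 1) :=
      ih (fun i h1 h2 => hW i h1 (by omega))
    have hkpos : (0:ℝ) < (k:ℝ) + 1 := by positivity
    have h1Sk : (0:ℝ) < 1 + Sk := by linarith [hSnonneg k]
    -- the two diagonal scalars of (1 + WᵀW - M_k)
    have ha : (2 : ℝ) - (k:ℝ)/((k:ℝ)+1) = ((k:ℝ)+2)/((k:ℝ)+1) := by
      field_simp; ring
    have hb : (1 : ℝ) + c^2 - Sk/(1+Sk) = (1 + c^2*(1+Sk))/(1+Sk) := by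
      field_simp; ring
    have hk2pos : (0:ℝ) < (k:ℝ) + 2 := by positivity
    have hbpos : (0:ℝ) < 1 + c^2*(1+Sk) := by positivity
    have hWk := hW (k+1) (by omega) (le_refl _)
    rw [MrecGen, hMk, hWk]
    have htrans : (Matrix.fromBlocks ((R (k+1)).permMatrix ℝ) 0 0
        (c • (1 : Matrix (Fin q) (Fin q) ℝ)))ᵀ =
        Matrix.fromBlocks ((R (k+1)).permMatrix ℝ)ᵀ 0 0 (c • 1) := by
      rw [Matrix.fromBlocks_transpose]
      congr 1 <;> simp [Matrix.transpose_smul]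
    rw [htrans]
    have hmid : (1 : Matrix (Fin r ⊕ Fin q) (Fin r ⊕ Fin q) ℝ) +
        Matrix.fromBlocks ((R (k+1)).permMatrix ℝ)ᵀ 0 0 (c • 1) *
          Matrix.fromBlocks ((R (k+1)).permMatrix ℝ) 0 0 (c • 1) -
        Matrix.fromBlocks (((k : ℝ) / ((k : ℝ) + 1)) • 1) 0 0 ((Sk / (1 + Sk)) • 1) =
        Matrix.fromBlocks ((((k:ℝ)+2)/((k:ℝ)+1)) • 1) 0 0
          (((1 + c^2*(1+Sk))/(1+Sk)) • 1) := by
      have hPTP : ((R (k+1)).permMatrix ℝ)ᵀ * ((R (k+1)).permMatrix ℝ) = 1 := by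
        have := perm_mul_permT ((R (k+1))⁻¹)
        rw [Equiv.Perm.permMatrix, ← PEquiv.toMatrix_symm, ← PEquiv.toMatrix_trans,
          ← Equiv.toPEquiv_symm, ← Equiv.toPEquiv_trans]
        simp
      have hmul : Matrix.fromBlocks ((R (k+1)).permMatrix ℝ)ᵀ 0 0
            (c • (1 : Matrix (Fin q) (Fin q) ℝ)) *
          Matrix.fromBlocks ((R (k+1)).permMatrix ℝ) 0 0 (c • 1) =
          Matrix.fromBlocks 1 0 0 ((c * c) • 1) := by
        rw [Matrix.fromBlocks_multiply, hPTP]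
        simp [hPTP, Matrix.smul_mul, Matrix.mul_smul, smul_smul]
      rw [hmul]
      ext i j
      rcases i with i | i <;> rcases j with j | j <;>
        simp only [Matrix.add_apply, Matrix.sub_apply, Matrix.one_apply,
          Matrix.fromBlocks_apply₁₁, Matrix.fromBlocks_apply₁₂, Matrix.fromBlocks_apply₂₁,
          Matrix.fromBlocks_apply₂₂, Matrix.smul_apply, Matrix.zero_apply, smul_eq_mul,
          Sum.inl.injEq, Sum.inr.injEq, reduceCtorEq, if_false] <;>
        [skip; simp; simp; skip] <;>
        by_cases h : i = j <;> simp only [h, if_true, if_false, if_pos, if_neg, ite_true,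
          ite_false, mul_one, mul_zero] <;>
        first
          | (field_simp; ring)
          | simp [h]
    rw [hmid, blockdiag_inv _ _ (by positivity) (by positivity)]
    rw [Matrix.fromBlocks_multiply, Matrix.fromBlocks_multiply]
    have hP : (R (k+1)).permMatrix ℝ * ((((k:ℝ)+2)/((k:ℝ)+1))⁻¹ • 1) *
        ((R (k+1)).permMatrix ℝ)ᵀ = (((k:ℝ)+1)/((k:ℝ)+2)) • (1 : Matrix (Fin r) (Fin r) ℝ) := by
      rw [Matrix.mul_smul, Matrix.mul_one, Matrix.smul_mul, perm_mul_permT]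
      congr 1
      rw [inv_div]
    simp only [Matrix.mul_zero, Matrix.zero_mul, add_zero, zero_add, hP]
    have h2 : (c • (1 : Matrix (Fin q) (Fin q) ℝ)) *
        (((1 + c ^ 2 * (1 + Sk)) / (1 + Sk))⁻¹ • 1) * (c • 1) =
        ((c^2 * (1+Sk)) / (1 + c^2*(1+Sk))) • 1 := by
      simp only [Matrix.smul_mul, Matrix.mul_smul, Matrix.one_mul, Matrix.mul_one, smul_smul]
      congr 1
      rw [inv_div]
      field_simp
    rw [hSsucc, h2]
    have h3 : ((k:ℝ)+1)/((k:ℝ)+2) = ((k:ℝ)+1)/((k:ℝ)+1+1) := by ring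
    push_cast
    rw [h3]
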